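/- For each 0<δ<1 let ψ_δ:ℝ→[0,1/(2δ)] be a continuous function with ψ_δ(s) = 1/(2δ) for |s| ≤ δ − δ² and ψ_δ(s) = 0 for |s| ≥ δ + δ², and set ψ_{r,δ}(s) = ψ_δ(s−r). Let J be a continuously differentiable function with compact support in (0,∞). Then there exists a finite constant C₀, depending only on J, such that for all sufficiently small δ > 0: limsup_{T→∞} sup_{η ∈ {0,1}^{ℤ²}} | ∫₀^∞ J(r) μ^{1,T}(η)(dr) − ∫₀^∞ J(r) ( ∫ ψ_{r,δ} dμ^{1,T}(η) ) dr | ≤ C₀ δ. -/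

import Mathlib

open MeasureTheory Set Filter
open scoped Classical

noncomputable section

/-- Square of the Euclidean norm of a point of `ℤ²`. -/
def nsq (x : ℤ × ℤ) : ℝ := ((x.1 : ℝ)) ^ 2 + ((x.2 : ℝ)) ^ 2

/-- Euclidean norm of a point of `ℤ²`. -/
def enorm2 (x : ℤ × ℤ) : ℝ := Real.sqrt (nsq x)

/-- `σ_T(x) = log |x| / log T`. -/
def sig (T : ℝ) (x : ℤ × ℤ) : ℝ := Real.log (enorm2 x) / Real.log T

/-- Integral of `f` against the polar empirical measure `μ^{1,T}(η)`:
`(1/(2π log T)) Σ_{x ≠ 0} η(x) f(σ_T(x)) / |x|²`. -/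
def polarInt (T : ℝ) (η : ℤ × ℤ → ℝ) (f : ℝ → ℝ) : ℝ :=
  (1 / (2 * Real.pi * Real.log T)) *
    ∑' x : ℤ × ℤ, if x ≠ 0 then η x * f (sig T x) / nsq x else 0

def key (x : ℤ × ℤ) : ℕ := max x.1.natAbs x.2.natAbs

lemma nsq_nonneg (x : ℤ × ℤ) : 0 ≤ nsq x := by unfold nsq; positivity

lemma sq_int_cast (n : ℤ) : ((n : ℝ)) ^ 2 = ((n.natAbs : ℝ)) ^ 2 := by
  rw [Nat.cast_natAbs, Int.cast_abs, sq_abs]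

lemma key_sq_le_nsq (x : ℤ × ℤ) : ((key x : ℝ)) ^ 2 ≤ nsq x := by
  unfold nsq key
  rcases max_cases x.1.natAbs x.2.natAbs with ⟨h, _⟩ | ⟨h, _⟩ <;> rw [h]
  · nlinarith [sq_int_cast x.1, sq_nonneg ((x.2:ℝ))]
  · nlinarith [sq_int_cast x.2, sq_nonneg ((x.1:ℝ))]

lemma nsq_le_two_key_sq (x : ℤ × ℤ) : nsq x ≤ 2 * ((key x : ℝ)) ^ 2 := by
  unfold nsq key
  have h1 : x.1.natAbs ≤ max x.1.natAbs x.2.natAbs := le_max_left _ _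
  have h2 : x.2.natAbs ≤ max x.1.natAbs x.2.natAbs := le_max_right _ _
  have c1 : ((x.1.natAbs : ℝ)) ≤ ((max x.1.natAbs x.2.natAbs : ℕ) : ℝ) := by exact_mod_cast h1
  have c2 : ((x.2.natAbs : ℝ)) ≤ ((max x.1.natAbs x.2.natAbs : ℕ) : ℝ) := by exact_mod_cast h2
  nlinarith [sq_int_cast x.1, sq_int_cast x.2, Nat.cast_nonneg (α := ℝ) x.1.natAbs,
    Nat.cast_nonneg (α := ℝ) x.2.natAbs]

lemma one_le_nsq {x : ℤ × ℤ} (hx : x ≠ 0) : 1 ≤ nsq x := by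
  have : 1 ≤ key x := by
    unfold key
    rcases eq_or_ne x.1 0 with h1 | h1
    · have h2 : x.2 ≠ 0 := fun h2 => hx (Prod.ext h1 h2)
      have : 1 ≤ x.2.natAbs := Int.natAbs_pos.mpr h2
      omega
    · have : 1 ≤ x.1.natAbs := Int.natAbs_pos.mpr h1
      omega
  calc (1:ℝ) = (1:ℝ)^2 := by ring
  _ ≤ ((key x : ℝ))^2 := by
      have : (1:ℝ) ≤ (key x : ℝ) := by exact_mod_cast this
      nlinarith
  _ ≤ nsq x := key_sq_le_nsq x

lemma nsq_pos {x : ℤ × ℤ} (hx : x ≠ 0) : 0 < nsq x := lt_of_lt_of_le one_pos (one_le_nsq hx)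

lemma key_le_enorm2 (x : ℤ × ℤ) : ((key x : ℝ)) ≤ enorm2 x := by
  unfold enorm2
  have := key_sq_le_nsq x
  nlinarith [Real.sq_sqrt (nsq_nonneg x), Real.sqrt_nonneg (nsq x), Nat.cast_nonneg (α := ℝ) (key x)]

lemma enorm2_le_two_key (x : ℤ × ℤ) : enorm2 x ≤ 2 * ((key x : ℝ)) := by
  unfold enorm2
  have h := nsq_le_two_key_sq x
  have h2 : nsq x ≤ (2 * ((key x:ℝ)))^2 := by nlinarith [sq_nonneg ((key x:ℝ))]
  calc Real.sqrt (nsq x) ≤ Real.sqrt ((2 * ((key x:ℝ)))^2) := Real.sqrt_le_sqrt h2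
  _ = 2 * ((key x:ℝ)) := Real.sqrt_sq (by positivity)

lemma one_le_enorm2 {x : ℤ × ℤ} (hx : x ≠ 0) : 1 ≤ enorm2 x := by
  unfold enorm2
  nlinarith [Real.sq_sqrt (nsq_nonneg x), Real.sqrt_nonneg (nsq x), one_le_nsq hx]

lemma harmonic_bound (m : ℕ) (hm : 1 ≤ m) : ∀ N : ℕ, m ≤ N →
    ∑ k ∈ Finset.Icc m N, ((k : ℝ))⁻¹ ≤ Real.log N - Real.log m + 1 := by
  intro N
  induction N with
  | zero => intro h; omega
  | succ n ih =>
    intro h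
    rcases eq_or_lt_of_le h with h1 | h1
    · rw [← h1, Finset.Icc_self, Finset.sum_singleton]
      have h0 : (1:ℝ) ≤ (m:ℝ) := by exact_mod_cast hm
      have h2 : ((m:ℝ))⁻¹ ≤ 1 := by
        rw [inv_le_one_iff₀]; right; exact h0
      have h3 : Real.log (m:ℝ) ≤ Real.log (m:ℝ) := le_refl _
      linarith
    · have hn : m ≤ n := by omega
      have hsum : Finset.Icc m (n+1) = insert (n+1) (Finset.Icc m n) := by
        rw [← Finset.insert_Icc_right_eq_Icc_add_one (by omega)]
      rw [hsum, Finset.sum_insert (by simp)]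
      have hlog : ((n+1:ℕ):ℝ)⁻¹ ≤ Real.log ((n+1:ℕ):ℝ) - Real.log n := by
        have hn1 : (0:ℝ) < n := by
          have : 1 ≤ n := by omega
          exact_mod_cast Nat.lt_of_lt_of_le Nat.zero_lt_one this
        have hd : Real.log ((n:ℝ)) - Real.log ((n:ℝ)+1) ≤ (n:ℝ)/((n:ℝ)+1) - 1 := by
          rw [← Real.log_div (by positivity) (by positivity)]
          exact Real.log_le_sub_one_of_pos (by positivity)
        have : (n:ℝ)/((n:ℝ)+1) - 1 = -((n:ℝ)+1)⁻¹ := by field_simp; ring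
        push_cast
        push_cast at hd
        linarith [hd, this ▸ hd]
      have := ih hn
      push_cast at hlog ⊢
      linarith

lemma card_shell (k : ℕ) (hk : 1 ≤ k) (S : Finset (ℤ × ℤ)) (hS : ∀ x ∈ S, key x = k) :
    (S.card : ℝ) ≤ 8 * k := by
  classical
  set big : Finset (ℤ × ℤ) := Finset.Icc (-(k:ℤ)) k ×ˢ Finset.Icc (-(k:ℤ)) k with hbig
  set small : Finset (ℤ × ℤ) := Finset.Icc (-((k:ℤ)-1)) ((k:ℤ)-1) ×ˢ Finset.Icc (-((k:ℤ)-1)) ((k:ℤ)-1) with hsmall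
  have hsub : small ⊆ big := by
    intro x hx
    simp only [hsmall, hbig, Finset.mem_product, Finset.mem_Icc] at hx ⊢
    omega
  have hSsub : S ⊆ big \ small := by
    intro x hx
    have hkey := hS x hx
    unfold key at hkey
    simp only [hbig, hsmall, Finset.mem_sdiff, Finset.mem_product, Finset.mem_Icc]
    constructor
    · constructor <;> constructor <;> omega
    · intro hc
      obtain ⟨⟨h1, h2⟩, h3, h4⟩ := hc
      omega
  have hbigcard : big.card = (2*k+1) * (2*k+1) := by
    rw [hbig, Finset.card_product, Int.card_Icc]
    congr 1 <;> omega
  have hsmallcard : small.card = (2*k-1) * (2*k-1) := by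
    rw [hsmall, Finset.card_product, Int.card_Icc]
    congr 1 <;> omega
  have hcard : (big \ small).card = 8 * k := by
    rw [Finset.card_sdiff_of_subset hsub, hbigcard, hsmallcard]
    obtain ⟨j, rfl⟩ : ∃ j, k = j + 1 := ⟨k - 1, by omega⟩
    have h1 : 2*(j+1)-1 = 2*j+1 := by omega
    rw [h1]
    apply Nat.sub_eq_of_eq_add
    ring
  have := Finset.card_le_card hSsub
  rw [hcard] at this
  exact_mod_cast this

lemma shell_sum (m N : ℕ) (hm : 1 ≤ m) (hmN : m ≤ N) (S : Finset (ℤ × ℤ))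
    (hS : ∀ x ∈ S, m ≤ key x ∧ key x ≤ N) :
    ∑ x ∈ S, (nsq x)⁻¹ ≤ 8 * (Real.log N - Real.log m + 1) := by
  classical
  have h1 : ∑ x ∈ S, (nsq x)⁻¹
      = ∑ k ∈ Finset.Icc m N, ∑ x ∈ S.filter (fun x => key x = k), (nsq x)⁻¹ :=
    (Finset.sum_fiberwise_of_maps_to (fun x hx => Finset.mem_Icc.mpr (hS x hx)) _).symm
  rw [h1]
  have h2 : ∀ k ∈ Finset.Icc m N,
      ∑ x ∈ S.filter (fun x => key x = k), (nsq x)⁻¹ ≤ 8 * ((k:ℝ))⁻¹ := by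
    intro k hk
    rw [Finset.mem_Icc] at hk
    have hk1 : 1 ≤ k := le_trans hm hk.1
    have hkR : (1:ℝ) ≤ (k:ℝ) := by exact_mod_cast hk1
    have hterm : ∀ x ∈ S.filter (fun x => key x = k), (nsq x)⁻¹ ≤ (((k:ℝ))^2)⁻¹ := by
      intro x hx
      rw [Finset.mem_filter] at hx
      have hkey : ((k:ℝ))^2 ≤ nsq x := by
        rw [← hx.2]; exact key_sq_le_nsq x
      exact inv_anti₀ (by positivity) hkey
    calc ∑ x ∈ S.filter (fun x => key x = k), (nsq x)⁻¹
        ≤ (S.filter (fun x => key x = k)).card • (((k:ℝ))^2)⁻¹ :=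
          Finset.sum_le_card_nsmul _ _ _ hterm
      _ = ((S.filter (fun x => key x = k)).card : ℝ) * (((k:ℝ))^2)⁻¹ := by
          rw [nsmul_eq_mul]
      _ ≤ (8*k) * (((k:ℝ))^2)⁻¹ := by
          apply mul_le_mul_of_nonneg_right _ (by positivity)
          exact card_shell k hk1 _ (fun x hx => (Finset.mem_filter.mp hx).2)
      _ = 8 * ((k:ℝ))⁻¹ := by
          field_simp
  calc ∑ k ∈ Finset.Icc m N, ∑ x ∈ S.filter (fun x => key x = k), (nsq x)⁻¹
      ≤ ∑ k ∈ Finset.Icc m N, 8 * ((k:ℝ))⁻¹ := Finset.sum_le_sum h2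
    _ = 8 * ∑ k ∈ Finset.Icc m N, ((k:ℝ))⁻¹ := by rw [Finset.mul_sum]
    _ ≤ 8 * (Real.log N - Real.log m + 1) := by
        apply mul_le_mul_of_nonneg_left (harmonic_bound m hm N hmN) (by norm_num)

lemma conv_est (J ψ : ℝ → ℝ) (a b δ L M : ℝ)
    (hδ : 0 < δ) (hδ1 : δ < 1)
    (hJcont : Continuous J) (hJc : HasCompactSupport J)
    (hJs : tsupport J ⊆ Set.Ioi 0) (hJab : tsupport J ⊆ Set.Icc a b)
    (hL : 0 ≤ L) (hLip : ∀ x y, |J x - J y| ≤ L * |x - y|)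
    (hM : ∀ x, |J x| ≤ M)
    (hψc : Continuous ψ) (hψ1 : ∀ s, 0 ≤ ψ s ∧ ψ s ≤ 1/(2*δ))
    (hψ2 : ∀ s, |s| ≤ δ - δ^2 → ψ s = 1/(2*δ))
    (hψ3 : ∀ s, δ + δ^2 ≤ |s| → ψ s = 0) (σ : ℝ) :
    |J σ - ∫ r in Set.Ioi (0:ℝ), J r * ψ (σ - r)| ≤
      if σ ∈ Set.Icc (a - 2*δ) (b + 2*δ) then (4*L + M)*δ else 0 := by
  set c : ℝ := δ + δ^2 with hc
  have hc0 : 0 < c := by positivity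
  have hcδ : c ≤ 2*δ := by nlinarith
  have hψcs : HasCompactSupport ψ := by
    apply HasCompactSupport.intro (isCompact_Icc (a := -c) (b := c))
    intro s hs
    apply hψ3
    rw [Set.mem_Icc] at hs
    push_neg at hs
    rcases le_or_gt (-c) s with h | h
    · have := hs h
      calc c ≤ s := this.le
        _ ≤ |s| := le_abs_self s
    · calc c ≤ -s := by linarith
        _ ≤ |s| := neg_le_abs s
  have hψint : Integrable ψ := hψc.integrable_of_hasCompactSupport hψcs
  have hψnn : ∀ s, 0 ≤ ψ s := fun s => (hψ1 s).1
  -- bounds on ∫ ψ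
  have hIψ_upper : ∫ s, ψ s ≤ 1 + δ := by
    have h1 : ∫ s, ψ s = ∫ s in Set.Icc (-c) c, ψ s := by
      refine (setIntegral_eq_integral_of_forall_compl_eq_zero ?_).symm
      intro s hs
      apply hψ3
      rw [Set.mem_Icc] at hs
      push_neg at hs
      rcases le_or_gt (-c) s with h | h
      · exact le_trans (hs h).le (le_abs_self s)
      · exact le_trans (by linarith) (neg_le_abs s)
    rw [h1]
    have h2 : ∫ s in Set.Icc (-c) c, ψ s ≤ ∫ _ in Set.Icc (-c) c, 1/(2*δ) := by
      apply setIntegral_mono_on (hψint.integrableOn) (integrableOn_const ?_)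
        measurableSet_Icc (fun s _ => (hψ1 s).2)
      rw [Real.volume_Icc]
      exact ENNReal.ofReal_ne_top
    have h3 : ∫ _ in Set.Icc (-c) c, (1/(2*δ) : ℝ) = (2*c) * (1/(2*δ)) := by
      rw [setIntegral_const, Real.volume_real_Icc_of_le (by linarith), smul_eq_mul]
      ring_nf
    rw [h3] at h2
    calc ∫ s in Set.Icc (-c) c, ψ s ≤ (2*c) * (1/(2*δ)) := h2
      _ = 1 + δ := by field_simp [hc]; ring
  have hIψ_lower : 1 - δ ≤ ∫ s, ψ s := by
    set d : ℝ := δ - δ^2 with hd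
    have hd0 : 0 ≤ d := by nlinarith
    have h1 : ∫ s in Set.Icc (-d) d, ψ s = (2*d) * (1/(2*δ)) := by
      rw [setIntegral_congr_fun measurableSet_Icc (g := fun _ => 1/(2*δ))
        (fun s hs => hψ2 s (abs_le.mpr ⟨hs.1, hs.2⟩))]
      rw [setIntegral_const, Real.volume_real_Icc_of_le (by linarith), smul_eq_mul]
      ring_nf
    have h2 : ∫ s in Set.Icc (-d) d, ψ s ≤ ∫ s, ψ s :=
      setIntegral_le_integral hψint (Filter.Eventually.of_forall hψnn)
    rw [h1] at h2
    calc 1 - δ = (2*d) * (1/(2*δ)) := by field_simp [hd]; ring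
      _ ≤ ∫ s, ψ s := h2
  by_cases hwin : σ ∈ Set.Icc (a - 2*δ) (b + 2*δ)
  · rw [if_pos hwin]
    have hIoi : ∫ r in Set.Ioi (0:ℝ), J r * ψ (σ - r) = ∫ r, J r * ψ (σ - r) := by
      apply setIntegral_eq_integral_of_forall_compl_eq_zero
      intro r hr
      have : J r = 0 := image_eq_zero_of_notMem_tsupport (fun hmem => hr (hJs hmem))
      rw [this, zero_mul]
    have hcont2 : Continuous fun r => ψ (σ - r) := hψc.comp (continuous_const.sub continuous_id)
    have hint1 : Integrable (fun r => J r * ψ (σ - r)) :=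
      (hJcont.mul hcont2).integrable_of_hasCompactSupport (hJc.mul_right)
    have hint2 : Integrable (fun r => ψ (σ - r)) := by
      apply hcont2.integrable_of_hasCompactSupport
      apply HasCompactSupport.intro (isCompact_Icc (a := σ - c) (b := σ + c))
      intro r hr
      apply hψ3
      rw [Set.mem_Icc] at hr
      push_neg at hr
      rcases le_or_gt (σ - c) r with h | h
      · have h2 := hr h
        rw [abs_sub_comm]
        calc δ + δ^2 = c := rfl
          _ ≤ r - σ := by linarith
          _ ≤ |r - σ| := le_abs_self _
      · calc δ + δ^2 = c := rfl
          _ ≤ σ - r := by linarith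
          _ ≤ |σ - r| := le_abs_self _
    have hshift : ∫ r, ψ (σ - r) = ∫ s, ψ s := integral_sub_left_eq_self ψ volume σ
    have hsub : ∫ r, (J r - J σ) * ψ (σ - r)
        = (∫ r, J r * ψ (σ - r)) - J σ * ∫ s, ψ s := by
      have heq : (fun r => (J r - J σ) * ψ (σ - r))
          = fun r => J r * ψ (σ - r) - J σ * ψ (σ - r) := by
        funext r; ring
      rw [heq, integral_sub hint1 (hint2.const_mul _), MeasureTheory.integral_const_mul, hshift]
    have hbound1 : |∫ r, (J r - J σ) * ψ (σ - r)| ≤ L * c * ∫ s, ψ s := by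
      have hptw : ∀ r, ‖(J r - J σ) * ψ (σ - r)‖ ≤ L * c * ψ (σ - r) := by
        intro r
        rw [Real.norm_eq_abs, abs_mul, abs_of_nonneg (hψnn _)]
        rcases le_or_gt (δ + δ^2) |σ - r| with h | h
        · rw [hψ3 _ h]; simp [abs_nonneg]
        · apply mul_le_mul _ (le_refl _) (hψnn _) (by positivity)
          calc |J r - J σ| ≤ L * |r - σ| := hLip r σ
            _ ≤ L * c := by
                apply mul_le_mul_of_nonneg_left _ hL
                rw [abs_sub_comm]
                exact h.le
      calc |∫ r, (J r - J σ) * ψ (σ - r)| ≤ ∫ r, L * c * ψ (σ - r) := by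
            rw [← Real.norm_eq_abs]
            exact norm_integral_le_of_norm_le (hint2.const_mul _)
              (Filter.Eventually.of_forall hptw)
        _ = L * c * ∫ s, ψ s := by rw [MeasureTheory.integral_const_mul, hshift]
    have hIψδ : |(∫ s, ψ s) - 1| ≤ δ := abs_le.mpr ⟨by linarith, by linarith⟩
    have hMσ := hM σ
    have hM0 : 0 ≤ M := le_trans (abs_nonneg _) hMσ
    have hIψle2 : ∫ s, ψ s ≤ 2 := by linarith
    have hIψ0 : 0 ≤ ∫ s, ψ s := by linarith [hIψ_lower]
    rw [hIoi]
    have expand : J σ - ∫ r, J r * ψ (σ - r)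
        = (J σ * (1 - ∫ s, ψ s)) - ∫ r, (J r - J σ) * ψ (σ - r) := by
      rw [hsub]; ring
    rw [expand]
    calc |(J σ * (1 - ∫ s, ψ s)) - ∫ r, (J r - J σ) * ψ (σ - r)|
        ≤ |J σ * (1 - ∫ s, ψ s)| + |∫ r, (J r - J σ) * ψ (σ - r)| := abs_sub _ _
      _ ≤ M * δ + L * c * 2 := by
          apply add_le_add
          · rw [abs_mul]
            have h1 : |1 - ∫ s, ψ s| ≤ δ := by rw [abs_sub_comm]; exact hIψδ
            exact mul_le_mul hMσ h1 (abs_nonneg _) hM0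
          · calc |∫ r, (J r - J σ) * ψ (σ - r)| ≤ L * c * ∫ s, ψ s := hbound1
              _ ≤ L * c * 2 := by
                  apply mul_le_mul_of_nonneg_left hIψle2 (by positivity)
      _ ≤ (4*L + M)*δ := by nlinarith
  · rw [if_neg hwin]
    have hJσ : J σ = 0 := by
      apply image_eq_zero_of_notMem_tsupport
      intro hmem
      have h1 := hJab hmem
      rw [Set.mem_Icc] at h1
      apply hwin
      rw [Set.mem_Icc]
      constructor <;> linarith
    have hzero : Set.EqOn (fun r => J r * ψ (σ - r)) (fun _ => (0:ℝ)) (Set.Ioi 0) := by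
      intro r _
      rcases eq_or_ne (J r) 0 with h | h
      · simp only [h, zero_mul]
      · have hr : r ∈ Set.Icc a b := hJab (subset_closure (Function.mem_support.mpr h))
        rw [Set.mem_Icc] at hr
        have hfar : δ + δ^2 ≤ |σ - r| := by
          rw [Set.mem_Icc] at hwin
          push_neg at hwin
          rcases lt_or_ge σ (a - 2*δ) with h1 | h1
          · rw [abs_sub_comm]
            calc δ + δ^2 ≤ 2*δ := hcδ
              _ ≤ r - σ := by linarith
              _ ≤ |r - σ| := le_abs_self _
          · have h2 := hwin h1
            calc δ + δ^2 ≤ 2*δ := hcδ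
              _ ≤ σ - r := by linarith
              _ ≤ |σ - r| := le_abs_self _
        simp only [hψ3 _ hfar, mul_zero]
    rw [setIntegral_congr_fun measurableSet_Ioi hzero]
    simp [hJσ]

set_option maxHeartbeats 2000000 in
/-- Introduction of an average through the approximation of the identity `ψ_{r,δ}`:
`∫ J dμ^{1,T}` differs from `∫ J(r) μ^{1,T}(ψ_{r,δ}) dr` by an error of order `δ`,
uniformly over the configurations, as `T → ∞`. The `limsup sup ≤ C₀δ` statement is
formulated with an arbitrary `ε > 0`, for all sufficiently small `δ > 0`. -/
theorem stmt15 (J : ℝ → ℝ) (hJ : ContDiff ℝ 1 J)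
    (hJc : HasCompactSupport J) (hJs : tsupport J ⊆ Set.Ioi 0) :
    ∃ C₀ : ℝ, ∃ δ₀ : ℝ, 0 < δ₀ ∧ ∀ δ : ℝ, 0 < δ → δ < δ₀ →
      ∀ ψ : ℝ → ℝ, Continuous ψ →
        (∀ s, 0 ≤ ψ s ∧ ψ s ≤ 1 / (2 * δ)) →
        (∀ s, |s| ≤ δ - δ ^ 2 → ψ s = 1 / (2 * δ)) →
        (∀ s, δ + δ ^ 2 ≤ |s| → ψ s = 0) →
        ∀ ε : ℝ, 0 < ε → ∃ T₀ : ℝ, ∀ T : ℝ, T₀ ≤ T →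
          ∀ η : ℤ × ℤ → ℝ, (∀ x, η x = 0 ∨ η x = 1) →
            |polarInt T η J
              - ∫ r in Set.Ioi (0:ℝ), J r * polarInt T η (fun s => ψ (s - r))|
              ≤ C₀ * δ + ε := by
    classical
  -- Lipschitz constant
  obtain ⟨K, hK⟩ := hJ.lipschitzWith_of_hasCompactSupport hJc one_ne_zero
  set L : ℝ := (K : ℝ) with hLdef
  have hL : 0 ≤ L := K.coe_nonneg
  have hLip : ∀ x y, |J x - J y| ≤ L * |x - y| := by
    intro x y
    have := hK.dist_le_mul x y
    rwa [Real.dist_eq, Real.dist_eq] at this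
  -- sup bound
  obtain ⟨M, hM'⟩ := hJc.exists_bound_of_continuous hJ.continuous
  have hM : ∀ x, |J x| ≤ M := fun x => (Real.norm_eq_abs (J x)) ▸ hM' x
  have hM0 : 0 ≤ M := le_trans (abs_nonneg _) (hM 0)
  -- support interval
  obtain ⟨a, b, ha, hab', hJab⟩ :
      ∃ a b : ℝ, 0 < a ∧ a ≤ b ∧ tsupport J ⊆ Set.Icc a b := by
    by_cases hne : (tsupport J).Nonempty
    · refine ⟨sInf (tsupport J), sSup (tsupport J), ?_, ?_, ?_⟩
      · exact hJs (hJc.sInf_mem hne)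
      · obtain ⟨y, hy⟩ := hne
        exact le_trans (csInf_le hJc.isBounded.bddBelow hy)
          (le_csSup hJc.isBounded.bddAbove hy)
      · intro y hy
        exact ⟨csInf_le hJc.isBounded.bddBelow hy, le_csSup hJc.isBounded.bddAbove hy⟩
    · rw [Set.not_nonempty_iff_eq_empty] at hne
      exact ⟨1, 2, one_pos, one_le_two, by rw [hne]; exact Set.empty_subset _⟩
  set C₁ : ℝ := 4 * L + M with hC₁def
  have hC₁0 : 0 ≤ C₁ := by positivity
  set KJ : ℝ := b - a + 5 + 2 * Real.log 2 with hKJdef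
  have hKJ0 : 0 < KJ := by
    have := Real.log_nonneg (by norm_num : (1:ℝ) ≤ 2)
    simp only [hKJdef]
    nlinarith
  refine ⟨C₁ * 8 * KJ / (2 * Real.pi), min (a/4) 1, by positivity, ?_⟩
  intro δ hδ hδ₀ ψ hψc hψ1 hψ2 hψ3 ε hε
  have hδ1 : δ < 1 := lt_of_lt_of_le hδ₀ (min_le_right _ _)
  have hδa : δ < a / 4 := lt_of_lt_of_le hδ₀ (min_le_left _ _)
  refine ⟨Real.exp (1 + 2 * Real.log 2 / a), ?_⟩
  intro T hT η hη
  have hT0 : 0 < T := lt_of_lt_of_le (Real.exp_pos _) hT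
  have hlogT : 1 + 2 * Real.log 2 / a ≤ Real.log T := by
    calc 1 + 2 * Real.log 2 / a = Real.log (Real.exp (1 + 2 * Real.log 2 / a)) :=
          (Real.log_exp _).symm
      _ ≤ Real.log T := Real.log_le_log (Real.exp_pos _) hT
  have hlog2 : (0:ℝ) ≤ Real.log 2 := Real.log_nonneg (by norm_num)
  have hlogT1 : 1 ≤ Real.log T := by
    have : 0 ≤ 2 * Real.log 2 / a := by positivity
    linarith
  have hlogT0 : 0 < Real.log T := lt_of_lt_of_le one_pos hlogT1
  have hT1 : 1 < T := (Real.log_pos_iff hT0.le).mp hlogT0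
  -- exponents
  set p : ℝ := b + 2 * δ with hpdef
  set q : ℝ := a - 2 * δ with hqdef
  have hq2 : a / 2 ≤ q := by simp only [hqdef]; linarith
  have hq0 : 0 < q := by linarith
  have hp0 : 0 < p := by simp only [hpdef]; linarith
  have hqp : q ≤ p := by simp only [hpdef, hqdef]; linarith
  have hTq2 : 2 ≤ T ^ q := by
    rw [Real.rpow_def_of_pos hT0]
    calc (2:ℝ) = Real.exp (Real.log 2) := (Real.exp_log (by norm_num)).symm
      _ ≤ Real.exp (Real.log T * q) := by
          apply Real.exp_le_exp.mpr
          have h1 : 2 * Real.log 2 / a ≤ Real.log T := by linarith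
          have h2 : 2 * Real.log 2 / a * (a/2) = Real.log 2 := by field_simp
          calc Real.log 2 = 2 * Real.log 2 / a * (a/2) := h2.symm
            _ ≤ Real.log T * (a/2) := by
                apply mul_le_mul_of_nonneg_right h1 (by linarith)
            _ ≤ Real.log T * q := by
                apply mul_le_mul_of_nonneg_left hq2 (le_of_lt hlogT0)
  have hTq0 : (0:ℝ) < T ^ q := Real.rpow_pos_of_pos hT0 q
  have hTp0 : (0:ℝ) < T ^ p := Real.rpow_pos_of_pos hT0 p
  have hTp1 : (1:ℝ) ≤ T ^ p := Real.one_le_rpow hT1.le hp0.le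
  have hTqp : T ^ q ≤ T ^ p := Real.rpow_le_rpow_of_exponent_le hT1.le hqp
  set N : ℕ := ⌈T ^ p⌉₊ with hNdef
  set m : ℕ := ⌈T ^ q / 2⌉₊ with hmdef
  have hm1 : 1 ≤ m := Nat.ceil_pos.mpr (by positivity)
  have hmN : m ≤ N := Nat.ceil_le_ceil (by linarith)
  have hmreal : T ^ q / 2 ≤ (m:ℝ) := Nat.le_ceil _
  have hNreal : (N:ℝ) < T ^ p + 1 := Nat.ceil_lt_add_one hTp0.le
  have hNreal2 : (N:ℝ) ≤ 2 * T ^ p := by linarith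
  have hN0 : (0:ℝ) < (N:ℝ) := by
    have : (1:ℕ) ≤ N := le_trans hm1 hmN
    exact_mod_cast this
  have hlogN : Real.log N ≤ Real.log 2 + p * Real.log T := by
    calc Real.log N ≤ Real.log (2 * T ^ p) := Real.log_le_log hN0 hNreal2
      _ = Real.log 2 + p * Real.log T := by
          rw [Real.log_mul (by norm_num) (ne_of_gt hTp0), Real.log_rpow hT0]
  have hlogm : q * Real.log T - Real.log 2 ≤ Real.log m := by
    have h1 : Real.log (T ^ q / 2) ≤ Real.log m :=
      Real.log_le_log (by positivity) hmreal
    rwa [Real.log_div (ne_of_gt hTq0) (by norm_num), Real.log_rpow hT0] at h1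
  -- the box
  set box : Finset (ℤ × ℤ) :=
    Finset.Icc (-(N:ℤ)) (N:ℤ) ×ˢ Finset.Icc (-(N:ℤ)) (N:ℤ) with hboxdef
  have hbox_mem : ∀ x : ℤ × ℤ, x ∈ box ↔ key x ≤ N := by
    intro x
    simp only [hboxdef, Finset.mem_product, Finset.mem_Icc, key]
    omega
  have hsig_mul : ∀ x : ℤ × ℤ, Real.log (enorm2 x) = sig T x * Real.log T := by
    intro x
    unfold sig
    field_simp
  -- out of box: sigma large
  have hsig_out : ∀ x : ℤ × ℤ, x ∉ box → p < sig T x := by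
    intro x hx
    have hk : N < key x := by
      by_contra hc
      exact hx ((hbox_mem x).mpr (by omega))
    have h1 : T ^ p < (key x : ℝ) := by
      calc T ^ p ≤ (N:ℝ) := Nat.le_ceil _
        _ < (key x : ℝ) := by exact_mod_cast hk
    have h2 : T ^ p < enorm2 x := lt_of_lt_of_le h1 (key_le_enorm2 x)
    have h3 : p * Real.log T < Real.log (enorm2 x) := by
      calc p * Real.log T = Real.log (T ^ p) := (Real.log_rpow hT0 p).symm
        _ < Real.log (enorm2 x) := Real.log_lt_log hTp0 h2
    unfold sig
    rw [lt_div_iff₀ hlogT0]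
    exact h3
  have hbox0 : (0 : ℤ × ℤ) ∈ box := by
    rw [hbox_mem]
    simp [key]
  -- in window: key bounds
  have hkey_in : ∀ x : ℤ × ℤ, x ≠ 0 → sig T x ∈ Set.Icc (a - 2*δ) (b + 2*δ) →
      m ≤ key x ∧ key x ≤ N := by
    intro x hx hw
    rw [Set.mem_Icc] at hw
    have henn : 0 < enorm2 x := lt_of_lt_of_le one_pos (one_le_enorm2 hx)
    constructor
    · have h1 : q * Real.log T ≤ Real.log (enorm2 x) := by
        rw [hsig_mul x]
        exact mul_le_mul_of_nonneg_right hw.1 hlogT0.le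
      have h2 : T ^ q ≤ enorm2 x := by
        calc T ^ q = Real.exp (q * Real.log T) := by
              rw [Real.rpow_def_of_pos hT0]; ring_nf
          _ ≤ Real.exp (Real.log (enorm2 x)) := Real.exp_le_exp.mpr h1
          _ = enorm2 x := Real.exp_log henn
      have h3 : T ^ q / 2 ≤ (key x : ℝ) := by
        have := enorm2_le_two_key x
        linarith
      exact Nat.ceil_le.mpr h3
    · have h1 : Real.log (enorm2 x) ≤ p * Real.log T := by
        rw [hsig_mul x]
        exact mul_le_mul_of_nonneg_right hw.2 hlogT0.le
      have h2 : enorm2 x ≤ T ^ p := by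
        calc enorm2 x = Real.exp (Real.log (enorm2 x)) := (Real.exp_log henn).symm
          _ ≤ Real.exp (p * Real.log T) := Real.exp_le_exp.mpr h1
          _ = T ^ p := by rw [Real.rpow_def_of_pos hT0]; ring_nf
      have h3 : (key x : ℝ) ≤ (N : ℝ) := by
        calc (key x : ℝ) ≤ enorm2 x := key_le_enorm2 x
          _ ≤ T ^ p := h2
          _ ≤ (N:ℝ) := Nat.le_ceil _
      exact_mod_cast h3
  -- the constant prefactor
  set cst : ℝ := 1 / (2 * Real.pi * Real.log T) with hcstdef
  have hcst0 : 0 < cst := by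
    simp only [hcstdef]
    have := Real.pi_pos
    positivity
  -- support of the summand for J
  have hf_supp : ∀ x ∉ box,
      (if x ≠ 0 then η x * J (sig T x) / nsq x else 0) = 0 := by
    intro x hx
    have hx0 : x ≠ 0 := fun h => hx (h ▸ hbox0)
    have hs := hsig_out x hx
    have hJ0 : J (sig T x) = 0 := by
      apply image_eq_zero_of_notMem_tsupport
      intro hmem
      have h2 := (hJab hmem).2
      simp only [hpdef] at hs
      linarith
    rw [if_pos hx0, hJ0, mul_zero, zero_div]
  have hpolarJ : polarInt T η J
      = cst * ∑ x ∈ box, (if x ≠ 0 then η x * J (sig T x) / nsq x else 0) := by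
    unfold polarInt
    rw [← hcstdef]
    congr 1
    exact tsum_eq_sum hf_supp
  -- pointwise rewrite of the integrand
  have hfun : ∀ r : ℝ, J r * polarInt T η (fun s => ψ (s - r))
      = cst * ∑ x ∈ box,
          (J r * (if x ≠ 0 then η x * ψ (sig T x - r) / nsq x else 0)) := by
    intro r
    by_cases hJr : J r = 0
    · rw [hJr]
      simp only [zero_mul, Finset.sum_const_zero, mul_zero]
    · have hr : r ∈ Set.Icc a b := hJab (subset_closure (Function.mem_support.mpr hJr))
      rw [Set.mem_Icc] at hr
      have hsupp : ∀ x ∉ box,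
          (if x ≠ 0 then η x * ψ (sig T x - r) / nsq x else 0) = 0 := by
        intro x hx
        have hx0 : x ≠ 0 := fun h => hx (h ▸ hbox0)
        have hs := hsig_out x hx
        have hfar : δ + δ^2 ≤ |sig T x - r| := by
          have h1 : 2*δ ≤ sig T x - r := by
            simp only [hpdef] at hs
            linarith [hr.2]
          calc δ + δ^2 ≤ 2*δ := by nlinarith
            _ ≤ sig T x - r := h1
            _ ≤ |sig T x - r| := le_abs_self _
        rw [if_pos hx0, hψ3 _ hfar, mul_zero, zero_div]
      unfold polarInt
      rw [tsum_eq_sum hsupp, ← hcstdef, ← Finset.mul_sum]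
      ring
  -- integrability of each summand
  have hint : ∀ x ∈ box, IntegrableOn
      (fun r => J r * (if x ≠ 0 then η x * ψ (sig T x - r) / nsq x else 0))
      (Set.Ioi (0:ℝ)) volume := by
    intro x _
    by_cases hx : x = 0
    · subst hx
      simp only [ne_eq, not_true_eq_false, if_false, mul_zero]
      exact integrableOn_zero
    · have heq : (fun r => J r * (if x ≠ 0 then η x * ψ (sig T x - r) / nsq x else 0))
          = fun r => (η x / nsq x) * (J r * ψ (sig T x - r)) := by
        funext r
        rw [if_pos hx]
        ring
      rw [heq]
      apply Integrable.integrableOn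
      exact ((hJ.continuous.mul (hψc.comp (continuous_const.sub continuous_id))).integrable_of_hasCompactSupport
        hJc.mul_right).const_mul _
  -- swap integral and finite sum
  have hIeq : ∫ r in Set.Ioi (0:ℝ), J r * polarInt T η (fun s => ψ (s - r))
      = cst * ∑ x ∈ box, ∫ r in Set.Ioi (0:ℝ),
          J r * (if x ≠ 0 then η x * ψ (sig T x - r) / nsq x else 0) := by
    calc ∫ r in Set.Ioi (0:ℝ), J r * polarInt T η (fun s => ψ (s - r))
        = ∫ r in Set.Ioi (0:ℝ), cst * ∑ x ∈ box,
            (J r * (if x ≠ 0 then η x * ψ (sig T x - r) / nsq x else 0)) :=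
          integral_congr_ae (Filter.Eventually.of_forall (fun r => hfun r))
      _ = cst * ∫ r in Set.Ioi (0:ℝ), ∑ x ∈ box,
            (J r * (if x ≠ 0 then η x * ψ (sig T x - r) / nsq x else 0)) :=
          MeasureTheory.integral_const_mul cst _
      _ = cst * ∑ x ∈ box, ∫ r in Set.Ioi (0:ℝ),
            J r * (if x ≠ 0 then η x * ψ (sig T x - r) / nsq x else 0) := by
          rw [MeasureTheory.integral_finset_sum box hint]
  -- per-site estimate
  have hxbound : ∀ x ∈ box,
      |(if x ≠ 0 then η x * J (sig T x) / nsq x else 0)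
        - ∫ r in Set.Ioi (0:ℝ), J r * (if x ≠ 0 then η x * ψ (sig T x - r) / nsq x else 0)|
      ≤ (if x ≠ 0 ∧ sig T x ∈ Set.Icc (a - 2*δ) (b + 2*δ)
          then C₁ * δ * (nsq x)⁻¹ else 0) := by
    intro x _
    by_cases hx : x = 0
    · subst hx
      simp only [ne_eq, not_true_eq_false, if_false, mul_zero, false_and, integral_zero,
        sub_zero, abs_zero]
      exact le_refl 0
    · have hnsq0 : 0 < nsq x := nsq_pos hx
      have heq : (fun r => J r * (if x ≠ 0 then η x * ψ (sig T x - r) / nsq x else 0))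
          = fun r => (η x / nsq x) * (J r * ψ (sig T x - r)) := by
        funext r
        rw [if_pos hx]
        ring
      have hIx : ∫ r in Set.Ioi (0:ℝ),
            J r * (if x ≠ 0 then η x * ψ (sig T x - r) / nsq x else 0)
          = (η x / nsq x) * ∫ r in Set.Ioi (0:ℝ), J r * ψ (sig T x - r) := by
        rw [heq]
        exact MeasureTheory.integral_const_mul _ _
      rw [if_pos hx, hIx]
      have hstep : η x * J (sig T x) / nsq x
            - (η x / nsq x) * ∫ r in Set.Ioi (0:ℝ), J r * ψ (sig T x - r)
          = (η x / nsq x) * (J (sig T x) - ∫ r in Set.Ioi (0:ℝ), J r * ψ (sig T x - r)) := by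
        ring
      rw [hstep, abs_mul]
      have hηx : |η x / nsq x| ≤ (nsq x)⁻¹ := by
        rw [abs_div, abs_of_pos hnsq0, div_le_iff₀ hnsq0, inv_mul_cancel₀ (ne_of_gt hnsq0)]
        rcases hη x with h | h <;> rw [h] <;> norm_num
      have hconv := conv_est J ψ a b δ L M hδ hδ1 hJ.continuous hJc hJs hJab hL hLip hM
        hψc hψ1 hψ2 hψ3 (sig T x)
      by_cases hw : sig T x ∈ Set.Icc (a - 2*δ) (b + 2*δ)
      · rw [if_pos hw] at hconv
        rw [if_pos ⟨hx, hw⟩]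
        calc |η x / nsq x| * |J (sig T x) - ∫ r in Set.Ioi (0:ℝ), J r * ψ (sig T x - r)|
            ≤ (nsq x)⁻¹ * ((4*L + M)*δ) :=
              mul_le_mul hηx hconv (abs_nonneg _) (by positivity)
          _ = C₁ * δ * (nsq x)⁻¹ := by rw [hC₁def]; ring
      · rw [if_neg hw] at hconv
        rw [if_neg (fun hc => hw hc.2)]
        have h0 : |J (sig T x) - ∫ r in Set.Ioi (0:ℝ), J r * ψ (sig T x - r)| = 0 :=
          le_antisymm hconv (abs_nonneg _)
        rw [h0, mul_zero]
  -- the window set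
  set W : Finset (ℤ × ℤ) :=
    box.filter (fun x => x ≠ 0 ∧ sig T x ∈ Set.Icc (a - 2*δ) (b + 2*δ)) with hWdef
  have hsumD : ∑ x ∈ box, (if x ≠ 0 ∧ sig T x ∈ Set.Icc (a - 2*δ) (b + 2*δ)
        then C₁ * δ * (nsq x)⁻¹ else 0)
      = C₁ * δ * ∑ x ∈ W, (nsq x)⁻¹ := by
    rw [← Finset.sum_filter, ← Finset.mul_sum]
  have hshell : ∑ x ∈ W, (nsq x)⁻¹ ≤ 8 * (Real.log N - Real.log m + 1) := by
    apply shell_sum m N hm1 hmN W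
    intro x hx
    rw [hWdef, Finset.mem_filter] at hx
    exact hkey_in x hx.2.1 hx.2.2
  have hlogbound : Real.log N - Real.log m + 1 ≤ KJ * Real.log T := by
    have hpq : p - q = b - a + 4*δ := by simp only [hpdef, hqdef]; ring
    have h2 : (p - q) * Real.log T ≤ (b - a + 4) * Real.log T := by
      apply mul_le_mul_of_nonneg_right _ hlogT0.le
      rw [hpq]
      linarith
    have h3 : 2*Real.log 2 + 1 ≤ (2*Real.log 2 + 1) * Real.log T :=
      le_mul_of_one_le_right (by linarith) hlogT1
    calc Real.log N - Real.log m + 1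
        ≤ (Real.log 2 + p * Real.log T) - (q * Real.log T - Real.log 2) + 1 := by linarith
      _ = (p - q) * Real.log T + (2*Real.log 2 + 1) := by ring
      _ ≤ (b - a + 4) * Real.log T + (2*Real.log 2 + 1) * Real.log T := by linarith
      _ = KJ * Real.log T := by rw [hKJdef]; ring
  -- final computation
  rw [hpolarJ, hIeq, ← mul_sub, ← Finset.sum_sub_distrib]
  have hfinal : |cst * ∑ x ∈ box,
      ((if x ≠ 0 then η x * J (sig T x) / nsq x else 0)
        - ∫ r in Set.Ioi (0:ℝ), J r * (if x ≠ 0 then η x * ψ (sig T x - r) / nsq x else 0))|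
      ≤ C₁ * 8 * KJ / (2 * Real.pi) * δ := by
    rw [abs_mul, abs_of_pos hcst0]
    calc cst * |∑ x ∈ box,
        ((if x ≠ 0 then η x * J (sig T x) / nsq x else 0)
          - ∫ r in Set.Ioi (0:ℝ), J r * (if x ≠ 0 then η x * ψ (sig T x - r) / nsq x else 0))|
        ≤ cst * ∑ x ∈ box,
            |(if x ≠ 0 then η x * J (sig T x) / nsq x else 0)
              - ∫ r in Set.Ioi (0:ℝ), J r * (if x ≠ 0 then η x * ψ (sig T x - r) / nsq x else 0)| :=
          mul_le_mul_of_nonneg_left (Finset.abs_sum_le_sum_abs _ _) hcst0.le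
      _ ≤ cst * ∑ x ∈ box, (if x ≠ 0 ∧ sig T x ∈ Set.Icc (a - 2*δ) (b + 2*δ)
            then C₁ * δ * (nsq x)⁻¹ else 0) :=
          mul_le_mul_of_nonneg_left (Finset.sum_le_sum hxbound) hcst0.le
      _ = cst * (C₁ * δ * ∑ x ∈ W, (nsq x)⁻¹) := by rw [hsumD]
      _ ≤ cst * (C₁ * δ * (8 * (KJ * Real.log T))) := by
          apply mul_le_mul_of_nonneg_left _ hcst0.le
          apply mul_le_mul_of_nonneg_left _ (by positivity)
          calc ∑ x ∈ W, (nsq x)⁻¹ ≤ 8 * (Real.log N - Real.log m + 1) := hshell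
            _ ≤ 8 * (KJ * Real.log T) := by linarith
      _ = C₁ * 8 * KJ / (2 * Real.pi) * δ := by
          rw [hcstdef]
          field_simp
  linarith
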